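/- Let Op₁, ..., Opₙ be operators with Opᵢ : Set Tᵢ₋₁ → Set Tᵢ, and predicates Fᵢ (selections on Set Tᵢ) with Fₙ selecting the target output. Suppose for each i the pushed-down selection Gᵢ satisfies Opᵢ(Gᵢ(X)) ⊇ Fᵢ(Opᵢ(X)) for all X ⊆ Tᵢ₋₁, where Fᵢ₋₁ = Gᵢ. Then (Opₙ ∘ ⋯ ∘ Op₁)(G₁(T₀)) ⊇ Fₙ((Opₙ ∘ ⋯ ∘ Op₁)(T₀)), i.e., the rows selected by G₁ on the source table suffice to produce the target output. -/
import Mathlib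

/-- The pipeline `Opₙ ∘ ⋯ ∘ Op₁` applied to a source table. -/
def pipe {Ty : ℕ → Type*} (Op : ∀ i : ℕ, Set (Ty i) → Set (Ty (i + 1))) :
    ∀ n : ℕ, Set (Ty 0) → Set (Ty n)
  | 0 => id
  | n + 1 => fun X => Op n (pipe Op n X)

/-- pushing predicates down through a pipeline: the rows selected by the
final pushed-down predicate on the source suffice to produce the target output. -/
theorem stmt_3 {Ty : ℕ → Type*} (Op : ∀ i : ℕ, Set (Ty i) → Set (Ty (i + 1)))
    (hmono : ∀ i : ℕ, ∀ X Y : Set (Ty i), X ⊆ Y → Op i X ⊆ Op i Y)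
    (F : ∀ i : ℕ, Set (Ty i) → Set (Ty i))
    (hFsel : ∀ i : ℕ, ∀ X : Set (Ty i), F i X ⊆ X)
    (hpush : ∀ i : ℕ, ∀ X : Set (Ty i), F (i + 1) (Op i X) ⊆ Op i (F i X)) :
    ∀ (n : ℕ) (T₀ : Set (Ty 0)), F n (pipe Op n T₀) ⊆ pipe Op n (F 0 T₀) := by
  intro n
  induction n with
  | zero => intro T₀; exact fun x hx => hx
  | succ n ih =>
    intro T₀
    calc F (n + 1) (Op n (pipe Op n T₀)) ⊆ Op n (F n (pipe Op n T₀)) :=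
          hpush n _
      _ ⊆ Op n (pipe Op n (F 0 T₀)) := hmono n _ _ (ih T₀)
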